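/- arXiv:2505.23125 — 8 statements merged into one kernel-verified Lean document; each statement's English description precedes it below -/
import Mathlib

section
/- Let R_s, L_d, L_q > 0, φ ∈ ℝ, η ∈ [0,1], and let i_d, i_q, i_f, θ, ω, v_d, v_q : ℝ → ℝ be differentiable with θ' = ω and satisfying the faulty PMSM current dynamics. Then the signals i_α := i_d + (2η/3)·cos θ·i_f and i_β := i_q − (2η/3)·sin θ·i_f are differentiable and satisfy the linear time-varying system L_d·i_α' = −R_s·i_α + ω·L_q·i_β + v_d and L_q·i_β' = −ω·L_d·i_α − R_s·i_β − ω·φ + v_q on all of ℝ. -/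
open Real

/-- the signals `i_α = i_d + (2η/3)·cos θ·i_f` and
`i_β = i_q − (2η/3)·sin θ·i_f` of the faulty PMSM satisfy the LTV system
`L_d·i_α' = −R_s·i_α + ω·L_q·i_β + v_d`, `L_q·i_β' = −ω·L_d·i_α − R_s·i_β − ω·φ + v_q`. -/
theorem stmt_0
    (Rs Ld Lq φ η : ℝ)
    (hRs : 0 < Rs) (hLd : 0 < Ld) (hLq : 0 < Lq)
    (hη : η ∈ Set.Icc (0:ℝ) 1)
    (iD iQ iF θ ω vd vq : ℝ → ℝ)
    (iD' iQ' iF' : ℝ → ℝ)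
    (hθ : ∀ t, HasDerivAt θ (ω t) t)
    (hω : Differentiable ℝ ω) (hvd : Differentiable ℝ vd) (hvq : Differentiable ℝ vq)
    (hiF : ∀ t, HasDerivAt iF (iF' t) t)
    (hiD : ∀ t, HasDerivAt iD (iD' t) t)
    (hiQ : ∀ t, HasDerivAt iQ (iQ' t) t)
    (ed eq : ℝ → ℝ)
    (hed : ∀ t, ed t = (2 * η / 3) *
      ((-Rs * Real.cos (θ t) + ω t * (Ld - Lq) * Real.sin (θ t)) * iF t
        - Ld * Real.cos (θ t) * iF' t))
    (heq : ∀ t, eq t = (2 * η / 3) *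
      ((Rs * Real.sin (θ t) - ω t * (Ld - Lq) * Real.cos (θ t)) * iF t
        + Lq * Real.sin (θ t) * iF' t))
    (hdynD : ∀ t, Ld * iD' t = -Rs * iD t + ω t * Lq * iQ t + vd t + ed t)
    (hdynQ : ∀ t, Lq * iQ' t = -Rs * iQ t - ω t * Ld * iD t - ω t * φ + vq t + eq t) :
    ∃ iα' iβ' : ℝ → ℝ,
      (∀ t, HasDerivAt (fun s => iD s + (2 * η / 3) * Real.cos (θ s) * iF s) (iα' t) t) ∧
      (∀ t, HasDerivAt (fun s => iQ s - (2 * η / 3) * Real.sin (θ s) * iF s) (iβ' t) t) ∧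
      (∀ t, Ld * iα' t =
        -Rs * (iD t + (2 * η / 3) * Real.cos (θ t) * iF t)
          + ω t * Lq * (iQ t - (2 * η / 3) * Real.sin (θ t) * iF t) + vd t) ∧
      (∀ t, Lq * iβ' t =
        -(ω t) * Ld * (iD t + (2 * η / 3) * Real.cos (θ t) * iF t)
          - Rs * (iQ t - (2 * η / 3) * Real.sin (θ t) * iF t) - ω t * φ + vq t) := by
  refine ⟨fun t => iD' t + (2 * η / 3) * ((-Real.sin (θ t) * ω t) * iF t + Real.cos (θ t) * iF' t),
         fun t => iQ' t - (2 * η / 3) * ((Real.cos (θ t) * ω t) * iF t + Real.sin (θ t) * iF' t),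
         ?_, ?_, ?_, ?_⟩
  · intro t
    have h1 : HasDerivAt (fun s => (2 * η / 3) * Real.cos (θ s) * iF s)
        ((2 * η / 3) * ((-Real.sin (θ t) * ω t) * iF t + Real.cos (θ t) * iF' t)) t := by
      have hc : HasDerivAt (fun s => Real.cos (θ s)) (-Real.sin (θ t) * ω t) t :=
        (Real.hasDerivAt_cos (θ t)).comp t (hθ t)
      have := ((hc.const_mul (2 * η / 3)).mul (hiF t))
      exact this.congr_deriv (by ring)
    exact (hiD t).add h1
  · intro t
    have h1 : HasDerivAt (fun s => (2 * η / 3) * Real.sin (θ s) * iF s)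
        ((2 * η / 3) * ((Real.cos (θ t) * ω t) * iF t + Real.sin (θ t) * iF' t)) t := by
      have hc : HasDerivAt (fun s => Real.sin (θ s)) (Real.cos (θ t) * ω t) t :=
        (Real.hasDerivAt_sin (θ t)).comp t (hθ t)
      have := ((hc.const_mul (2 * η / 3)).mul (hiF t))
      exact this.congr_deriv (by ring)
    exact (hiQ t).sub h1
  · intro t
    have := hdynD t
    rw [hed t] at this
    nlinarith [this]
  · intro t
    have := hdynQ t
    rw [heq t] at this
    nlinarith [this]
end

section
/- Let R_s, L_d, L_q > 0 and let ω : ℝ → ℝ be continuous. If ε = (ε₁, ε₂) : ℝ → ℝ² is differentiable and satisfies the error dynamics L_d·ε₁' = −R_s·ε₁ + ω·L_q·ε₂ and L_q·ε₂' = −ω·L_d·ε₁ − R_s·ε₂, then for all t ≥ 0, |ε(t)|² ≤ m·e^{−ρ t}·|ε(0)|², where m := max{L_d/L_q, L_q/L_d} / min{L_d/L_q, L_q/L_d} and ρ := R_s·min{1/L_q, 1/L_d}. -/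
private lemma stmt2_ratio_sq (Ld Lq : ℝ) (hLd : 0 < Ld) (hLq : 0 < Lq) :
    max (Ld / Lq) (Lq / Ld) / min (Ld / Lq) (Lq / Ld)
      = max (Ld ^ 2) (Lq ^ 2) / min (Ld ^ 2) (Lq ^ 2) := by
  rcases le_total Ld Lq with h | h
  · have hdd : Ld / Lq ≤ Lq / Ld := by
      rw [div_le_div_iff₀ hLq hLd]; nlinarith
    have hsq : Ld ^ 2 ≤ Lq ^ 2 := by nlinarith
    rw [max_eq_right hdd, min_eq_left hdd, max_eq_right hsq, min_eq_left hsq]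
    field_simp
  · have hdd : Lq / Ld ≤ Ld / Lq := by
      rw [div_le_div_iff₀ hLd hLq]; nlinarith
    have hsq : Lq ^ 2 ≤ Ld ^ 2 := by nlinarith
    rw [max_eq_left hdd, min_eq_right hdd, max_eq_left hsq, min_eq_right hsq]
    field_simp

set_option maxHeartbeats 1000000 in
/-- exponential bound on the squared norm of solutions of the error
dynamics `L_d·ε₁' = −R_s·ε₁ + ω·L_q·ε₂`, `L_q·ε₂' = −ω·L_d·ε₁ − R_s·ε₂`:
`|ε(t)|² ≤ m·e^{−ρt}·|ε(0)|²` with `m = max{L_d/L_q, L_q/L_d}/min{L_d/L_q, L_q/L_d}`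
and `ρ = R_s·min{1/L_q, 1/L_d}`. -/
theorem stmt_2
    (Rs Ld Lq : ℝ) (hRs : 0 < Rs) (hLd : 0 < Ld) (hLq : 0 < Lq)
    (ω : ℝ → ℝ) (hω : Continuous ω)
    (ε1 ε2 ε1' ε2' : ℝ → ℝ)
    (h1 : ∀ t, HasDerivAt ε1 (ε1' t) t)
    (h2 : ∀ t, HasDerivAt ε2 (ε2' t) t)
    (hd1 : ∀ t, Ld * ε1' t = -Rs * ε1 t + ω t * Lq * ε2 t)
    (hd2 : ∀ t, Lq * ε2' t = -(ω t) * Ld * ε1 t - Rs * ε2 t) :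
    ∀ t ≥ (0:ℝ),
      (ε1 t) ^ 2 + (ε2 t) ^ 2
        ≤ (max (Ld / Lq) (Lq / Ld) / min (Ld / Lq) (Lq / Ld))
          * Real.exp (-(Rs * min (1 / Lq) (1 / Ld)) * t)
          * ((ε1 0) ^ 2 + (ε2 0) ^ 2) := by
  intro t ht
  set ρ : ℝ := Rs * min (1 / Lq) (1 / Ld) with hρdef
  have hmin1 : min (1 / Lq) (1 / Ld) ≤ 1 / Ld := min_le_right _ _
  have hmin2 : min (1 / Lq) (1 / Ld) ≤ 1 / Lq := min_le_left _ _
  have hminpos : 0 < min (1 / Lq) (1 / Ld) :=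
    lt_min (by positivity) (by positivity)
  have hρpos : 0 < ρ := mul_pos hRs hminpos
  have hc1 : min (1 / Lq) (1 / Ld) * Ld ≤ 1 := by
    calc min (1 / Lq) (1 / Ld) * Ld ≤ (1 / Ld) * Ld :=
          mul_le_mul_of_nonneg_right hmin1 hLd.le
      _ = 1 := by field_simp
  have hc2 : min (1 / Lq) (1 / Ld) * Lq ≤ 1 := by
    calc min (1 / Lq) (1 / Ld) * Lq ≤ (1 / Lq) * Lq :=
          mul_le_mul_of_nonneg_right hmin2 hLq.le
      _ = 1 := by field_simp
  -- ρ·Ld² ≤ Rs·Ld and ρ·Lq² ≤ Rs·Lq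
  have hb1 : ρ * Ld ^ 2 ≤ Rs * Ld := by
    have h := mul_le_mul_of_nonneg_left hc1 (mul_pos hRs hLd).le
    rw [hρdef]; nlinarith [h]
  have hb2 : ρ * Lq ^ 2 ≤ Rs * Lq := by
    have h := mul_le_mul_of_nonneg_left hc2 (mul_pos hRs hLq).le
    rw [hρdef]; nlinarith [h]
  -- Lyapunov function
  set V : ℝ → ℝ := fun s => Ld ^ 2 * ε1 s ^ 2 + Lq ^ 2 * ε2 s ^ 2 with hVdef
  set F : ℝ → ℝ := fun s => V s * Real.exp (ρ * s) with hFdef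
  have hVder : ∀ s, HasDerivAt V
      (Ld ^ 2 * (2 * ε1 s * ε1' s) + Lq ^ 2 * (2 * ε2 s * ε2' s)) s := by
    intro s
    have d1 : HasDerivAt (fun u => ε1 u ^ 2) (2 * ε1 s * ε1' s) s := by
      have := ((h1 s).fun_pow 2)
      simpa [mul_comm, mul_assoc, mul_left_comm] using this
    have d2 : HasDerivAt (fun u => ε2 u ^ 2) (2 * ε2 s * ε2' s) s := by
      have := ((h2 s).fun_pow 2)
      simpa [mul_comm, mul_assoc, mul_left_comm] using this
    exact (d1.const_mul (Ld ^ 2)).add (d2.const_mul (Lq ^ 2))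
  have hexp : ∀ s : ℝ, HasDerivAt (fun u => Real.exp (ρ * u))
      (Real.exp (ρ * s) * ρ) s := by
    intro s
    have : HasDerivAt (fun u : ℝ => ρ * u) ρ s := by
      simpa using (hasDerivAt_id s).const_mul ρ
    exact this.exp
  have hFder : ∀ s, HasDerivAt F
      ((Ld ^ 2 * (2 * ε1 s * ε1' s) + Lq ^ 2 * (2 * ε2 s * ε2' s)) * Real.exp (ρ * s)
        + V s * (Real.exp (ρ * s) * ρ)) s := fun s => (hVder s).mul (hexp s)
  have hF' : ∀ s, deriv F s ≤ 0 := by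
    intro s
    rw [(hFder s).deriv]
    have key : Ld ^ 2 * (2 * ε1 s * ε1' s) + Lq ^ 2 * (2 * ε2 s * ε2' s)
        = -2 * Rs * (Ld * ε1 s ^ 2 + Lq * ε2 s ^ 2) := by
      linear_combination (2 * Ld * ε1 s) * hd1 s + (2 * Lq * ε2 s) * hd2 s
    rw [key]
    have hW : 0 ≤ Ld * ε1 s ^ 2 + Lq * ε2 s ^ 2 := by positivity
    have hVbd : ρ * V s ≤ Rs * (Ld * ε1 s ^ 2 + Lq * ε2 s ^ 2) := by
      have t1 := mul_le_mul_of_nonneg_right hb1 (sq_nonneg (ε1 s))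
      have t2 := mul_le_mul_of_nonneg_right hb2 (sq_nonneg (ε2 s))
      simp only [hVdef]; nlinarith [t1, t2]
    have hexpos : 0 < Real.exp (ρ * s) := Real.exp_pos _
    have t3 := mul_le_mul_of_nonneg_right hVbd hexpos.le
    have t4 : 0 ≤ Rs * (Ld * ε1 s ^ 2 + Lq * ε2 s ^ 2) * Real.exp (ρ * s) :=
      mul_nonneg (mul_nonneg hRs.le hW) hexpos.le
    nlinarith [t3, t4]
  have hFanti : Antitone F :=
    antitone_of_deriv_nonpos (fun s => (hFder s).differentiableAt) hF'
  have hFle : F t ≤ F 0 := hFanti ht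
  have hVle : V t ≤ Real.exp (-ρ * t) * V 0 := by
    have h0 : F 0 = V 0 := by simp [hFdef]
    have hle : V t * Real.exp (ρ * t) ≤ V 0 := by
      have := hFle; rw [h0] at this; simpa [hFdef] using this
    have heq : Real.exp (ρ * t) * Real.exp (-ρ * t) = 1 := by
      rw [← Real.exp_add]; ring_nf; exact Real.exp_zero
    calc V t = V t * (Real.exp (ρ * t) * Real.exp (-ρ * t)) := by rw [heq, mul_one]
      _ = V t * Real.exp (ρ * t) * Real.exp (-ρ * t) := by ring
      _ ≤ V 0 * Real.exp (-ρ * t) :=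
          mul_le_mul_of_nonneg_right hle (Real.exp_pos _).le
      _ = Real.exp (-ρ * t) * V 0 := by ring
  have hm := stmt2_ratio_sq Ld Lq hLd hLq
  have hminsq : 0 < min (Ld ^ 2) (Lq ^ 2) := lt_min (by positivity) (by positivity)
  have hlow : min (Ld ^ 2) (Lq ^ 2) * (ε1 t ^ 2 + ε2 t ^ 2) ≤ V t := by
    have a1 := min_le_left (Ld ^ 2) (Lq ^ 2)
    have a2 := min_le_right (Ld ^ 2) (Lq ^ 2)
    have b1 := sq_nonneg (ε1 t); have b2 := sq_nonneg (ε2 t)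
    simp only [hVdef]
    nlinarith [mul_le_mul_of_nonneg_right a1 b1, mul_le_mul_of_nonneg_right a2 b2]
  have hhigh : V 0 ≤ max (Ld ^ 2) (Lq ^ 2) * (ε1 0 ^ 2 + ε2 0 ^ 2) := by
    have a1 := le_max_left (Ld ^ 2) (Lq ^ 2)
    have a2 := le_max_right (Ld ^ 2) (Lq ^ 2)
    have b1 := sq_nonneg (ε1 0); have b2 := sq_nonneg (ε2 0)
    simp only [hVdef]
    nlinarith [mul_le_mul_of_nonneg_right a1 b1, mul_le_mul_of_nonneg_right a2 b2]
  have chain : min (Ld ^ 2) (Lq ^ 2) * (ε1 t ^ 2 + ε2 t ^ 2)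
      ≤ Real.exp (-ρ * t) * (max (Ld ^ 2) (Lq ^ 2) * (ε1 0 ^ 2 + ε2 0 ^ 2)) := by
    calc min (Ld ^ 2) (Lq ^ 2) * (ε1 t ^ 2 + ε2 t ^ 2) ≤ V t := hlow
      _ ≤ Real.exp (-ρ * t) * V 0 := hVle
      _ ≤ Real.exp (-ρ * t) * (max (Ld ^ 2) (Lq ^ 2) * (ε1 0 ^ 2 + ε2 0 ^ 2)) :=
          by exact mul_le_mul_of_nonneg_left hhigh (Real.exp_pos (-ρ * t)).le
  rw [hm, div_mul_eq_mul_div, div_mul_eq_mul_div, le_div_iff₀ hminsq]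
  nlinarith [chain]
end

section
/- Let R_s, L_d, L_q > 0, ω : ℝ → ℝ continuous, and let ε = (ε₁, ε₂) : ℝ → ℝ² be differentiable with L_d·ε₁' = −R_s·ε₁ + ω·L_q·ε₂ and L_q·ε₂' = −ω·L_d·ε₁ − R_s·ε₂. Define V(t) := (1/2)·((L_d/L_q)·ε₁(t)² + (L_q/L_d)·ε₂(t)²). Then V is differentiable with V'(t) = −(R_s/L_q)·ε₁(t)² − (R_s/L_d)·ε₂(t)² ≤ −ρ·V(t) for all t, and consequently V(t) ≤ e^{−ρ t}·V(0) for all t ≥ 0, where ρ := R_s·min{1/L_q, 1/L_d}. -/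
/-- the Lyapunov function `V = (1/2)((L_d/L_q)ε₁² + (L_q/L_d)ε₂²)` is
differentiable along the error dynamics with
`V' = −(R_s/L_q)ε₁² − (R_s/L_d)ε₂² ≤ −ρ·V`, and hence `V(t) ≤ e^{−ρt}·V(0)` for `t ≥ 0`,
where `ρ = R_s·min{1/L_q, 1/L_d}`. -/
theorem stmt_3
    (Rs Ld Lq : ℝ) (hRs : 0 < Rs) (hLd : 0 < Ld) (hLq : 0 < Lq)
    (ω : ℝ → ℝ) (hω : Continuous ω)
    (ε1 ε2 ε1' ε2' : ℝ → ℝ)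
    (h1 : ∀ t, HasDerivAt ε1 (ε1' t) t)
    (h2 : ∀ t, HasDerivAt ε2 (ε2' t) t)
    (hd1 : ∀ t, Ld * ε1' t = -Rs * ε1 t + ω t * Lq * ε2 t)
    (hd2 : ∀ t, Lq * ε2' t = -(ω t) * Ld * ε1 t - Rs * ε2 t) :
    (∀ t, HasDerivAt (fun s => (1 / 2) * ((Ld / Lq) * (ε1 s) ^ 2 + (Lq / Ld) * (ε2 s) ^ 2))
        (-(Rs / Lq) * (ε1 t) ^ 2 - (Rs / Ld) * (ε2 t) ^ 2) t) ∧
    (∀ t, -(Rs / Lq) * (ε1 t) ^ 2 - (Rs / Ld) * (ε2 t) ^ 2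
        ≤ -(Rs * min (1 / Lq) (1 / Ld))
            * ((1 / 2) * ((Ld / Lq) * (ε1 t) ^ 2 + (Lq / Ld) * (ε2 t) ^ 2))) ∧
    (∀ t ≥ (0:ℝ),
      (1 / 2) * ((Ld / Lq) * (ε1 t) ^ 2 + (Lq / Ld) * (ε2 t) ^ 2)
        ≤ Real.exp (-(Rs * min (1 / Lq) (1 / Ld)) * t)
          * ((1 / 2) * ((Ld / Lq) * (ε1 0) ^ 2 + (Lq / Ld) * (ε2 0) ^ 2))) := by
  set ρ := Rs * min (1 / Lq) (1 / Ld) with hρdef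
  set V : ℝ → ℝ := fun s => (1 / 2) * ((Ld / Lq) * (ε1 s) ^ 2 + (Lq / Ld) * (ε2 s) ^ 2) with hVdef
  set V' : ℝ → ℝ := fun t => -(Rs / Lq) * (ε1 t) ^ 2 - (Rs / Ld) * (ε2 t) ^ 2 with hV'def
  have hV : ∀ t, HasDerivAt V (V' t) t := by
    intro t
    have h := ((((h1 t).pow 2).const_mul (Ld/Lq)).add (((h2 t).pow 2).const_mul (Lq/Ld))).const_mul (1/2)
    convert h using 1
    · rfl
    · rfl
    · rfl
    have e1 := hd1 t
    have e2 := hd2 t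
    simp only [hV'def, pow_one]
    field_simp
    linear_combination (-2*Ld*(ε1 t))*e1 + (-2*Lq*(ε2 t))*e2
  have hle : ∀ t, V' t ≤ -ρ * V t := by
    intro t
    have hm1 : ρ ≤ Rs / Lq := by
      rw [hρdef]
      calc Rs * min (1/Lq) (1/Ld) ≤ Rs * (1/Lq) := by
            exact mul_le_mul_of_nonneg_left (min_le_left _ _) hRs.le
        _ = Rs / Lq := by ring
    have hm2 : ρ ≤ Rs / Ld := by
      rw [hρdef]
      calc Rs * min (1/Lq) (1/Ld) ≤ Rs * (1/Ld) := by
            exact mul_le_mul_of_nonneg_left (min_le_right _ _) hRs.le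
        _ = Rs / Ld := by ring
    simp only [hV'def, hVdef]
    have hLdLq : (0:ℝ) < Ld / Lq := div_pos hLd hLq
    have hLqLd : (0:ℝ) < Lq / Ld := div_pos hLq hLd
    have k1 : ρ * ((Ld/Lq) * (ε1 t)^2) ≤ 2 * (Rs/Lq) * (ε1 t)^2 := by
      have : ρ * (Ld/Lq) ≤ Rs/Lq := by
        have := mul_le_mul_of_nonneg_right hm2 hLdLq.le
        calc ρ * (Ld/Lq) ≤ (Rs/Ld) * (Ld/Lq) := this
          _ = Rs/Lq := by field_simp
      nlinarith [sq_nonneg (ε1 t), div_pos hRs hLq]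
    have k2 : ρ * ((Lq/Ld) * (ε2 t)^2) ≤ 2 * (Rs/Ld) * (ε2 t)^2 := by
      have : ρ * (Lq/Ld) ≤ Rs/Ld := by
        have := mul_le_mul_of_nonneg_right hm1 hLqLd.le
        calc ρ * (Lq/Ld) ≤ (Rs/Lq) * (Lq/Ld) := this
          _ = Rs/Ld := by field_simp
      nlinarith [sq_nonneg (ε2 t), div_pos hRs hLd]
    nlinarith [k1, k2]
  refine ⟨hV, hle, ?_⟩
  intro t ht
  set W : ℝ → ℝ := fun s => Real.exp (ρ * s) * V s with hWdef
  have hW : ∀ s, HasDerivAt W (Real.exp (ρ * s) * (ρ * V s + V' s)) s := by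
    intro s
    have he : HasDerivAt (fun x => Real.exp (ρ * x)) (Real.exp (ρ * s) * ρ) s := by
      simpa [Function.comp_def] using (Real.hasDerivAt_exp (ρ * s)).comp s ((hasDerivAt_id s).const_mul ρ)
    have := he.mul (hV s)
    convert this using 1
    · rfl
    · rfl
    · rfl
    ring
  have hmono : ∀ a b : ℝ, a ≤ b → W b ≤ W a := by
    intro a b hab
    have : AntitoneOn W (Set.Icc a b) := by
      apply antitoneOn_of_deriv_nonpos (convex_Icc a b)
      · exact (Continuous.continuousOn (by
          exact ((Real.continuous_exp.comp (continuous_const.mul continuous_id)).mul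
            (by
              have : Continuous V := by
                apply Continuous.mul continuous_const
                exact ((continuous_const.mul ((continuous_pow 2).comp
                  (continuous_iff_continuousAt.2 fun t => (h1 t).continuousAt))).add
                  (continuous_const.mul ((continuous_pow 2).comp
                  (continuous_iff_continuousAt.2 fun t => (h2 t).continuousAt))))
              exact this))))
      · intro x _
        exact (hW x).differentiableAt.differentiableWithinAt
      · intro x hx
        rw [(hW x).deriv]
        have := hle x
        have hexp : (0:ℝ) < Real.exp (ρ * x) := Real.exp_pos _
        nlinarith [hle x]
    exact this (Set.left_mem_Icc.2 hab) (Set.right_mem_Icc.2 hab) hab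
  have hWt : W t ≤ W 0 := hmono 0 t ht
  have hexp : (0:ℝ) < Real.exp (ρ * t) := Real.exp_pos _
  have : Real.exp (ρ * t) * V t ≤ V 0 := by simpa [hWdef] using hWt
  have hfinal : V t ≤ Real.exp (-ρ * t) * V 0 := by
    rw [neg_mul, Real.exp_neg, inv_mul_eq_div]
    exact (le_div_iff₀ hexp).2 (by nlinarith [this])
  simpa [hVdef] using hfinal
end

section
/- Let R_s, L_d, L_q > 0, φ ∈ ℝ, η ∈ [0,1], and let i_d, i_q, i_f, θ, ω, v_d, v_q : ℝ → ℝ be differentiable with θ' = ω, satisfying the faulty PMSM current dynamics, and let î_αβ : ℝ → ℝ² be any differentiable solution of the observer L_d·î_α' = −R_s·î_α + ω·L_q·î_β + v_d, L_q·î_β' = −ω·L_d·î_α − R_s·î_β − ω·φ + v_q. Then for all t ≥ 0, | |î_αβ(t) − i_dq(t)| − (2η/3)·|i_f(t)| | ≤ √m·e^{−(ρ/2)t}·|î_αβ(0) − i_αβ(0)|, where m := max{L_d/L_q, L_q/L_d} / min{L_d/L_q, L_q/L_d} and ρ := R_s·min{1/L_q, 1/L_d}; in particular |î_αβ(t) −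 i_dq(t)| − (2η/3)·|i_f(t)| → 0 exponentially fast as t → ∞. -/
open Real Filter

/-- Reverse triangle inequality for the Euclidean norm on ℝ², via ℂ. -/
lemma abs_sqrt_sub_sqrt (a b u v : ℝ) :
    |Real.sqrt (a^2 + b^2) - Real.sqrt (u^2 + v^2)| ≤ Real.sqrt ((a-u)^2 + (b-v)^2) := by
  have h := abs_norm_sub_norm_le (⟨a, b⟩ : ℂ) ⟨u, v⟩
  have e1 : ‖(⟨a, b⟩ : ℂ)‖ = Real.sqrt (a^2 + b^2) := by
    rw [Complex.norm_def, Complex.normSq_mk]; ring_nf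
  have e2 : ‖(⟨u, v⟩ : ℂ)‖ = Real.sqrt (u^2 + v^2) := by
    rw [Complex.norm_def, Complex.normSq_mk]; ring_nf
  have e3 : ‖(⟨a, b⟩ - ⟨u, v⟩ : ℂ)‖ = Real.sqrt ((a-u)^2 + (b-v)^2) := by
    have : (⟨a, b⟩ - ⟨u, v⟩ : ℂ) = ⟨a - u, b - v⟩ := by
      apply Complex.ext <;> simp
    rw [this, Complex.norm_def, Complex.normSq_mk]; ring_nf
  rw [e1, e2, e3] at h
  exact h

/-- Gronwall-type lemma. -/
lemma gronwall (V V' : ℝ → ℝ) (ρ : ℝ) (hV : ∀ t, HasDerivAt V (V' t) t)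
    (h : ∀ t, V' t + ρ * V t ≤ 0) : ∀ t ≥ (0:ℝ), V t ≤ V 0 * Real.exp (-ρ * t) := by
  set W : ℝ → ℝ := fun t => V t * Real.exp (ρ * t) with hW
  have hW' : ∀ t, HasDerivAt W ((V' t + ρ * V t) * Real.exp (ρ * t)) t := by
    intro t
    have he : HasDerivAt (fun t => Real.exp (ρ * t)) (ρ * Real.exp (ρ * t)) t := by
      have := (Real.hasDerivAt_exp (ρ * t)).comp t ((hasDerivAt_id t).const_mul ρ)
      simpa [mul_comm, Function.comp_def] using this
    have := (hV t).mul he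
    exact this.congr_deriv (by ring)
  have hanti : Antitone W := by
    apply antitone_of_deriv_nonpos
    · exact fun t => (hW' t).differentiableAt
    · intro t
      rw [(hW' t).deriv]
      exact mul_nonpos_of_nonpos_of_nonneg (h t) (Real.exp_nonneg _)
  intro t ht
  have := hanti ht
  simp only [hW] at this
  have hpos : (0:ℝ) < Real.exp (ρ * t) := Real.exp_pos _
  have h0 : V t * Real.exp (ρ * t) ≤ V 0 := by simpa using this
  calc V t = (V t * Real.exp (ρ * t)) * Real.exp (-ρ * t) := by
        rw [mul_assoc, ← Real.exp_add]; simp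
    _ ≤ V 0 * Real.exp (-ρ * t) := mul_le_mul_of_nonneg_right h0 (Real.exp_nonneg _)

set_option maxHeartbeats 1000000 in
/-- for any solution `î_αβ` of the observer, the estimated fault-current
norm `|î_αβ(t) − i_dq(t)|` converges to the actual one `(2η/3)|i_f(t)|`:
`| |î_αβ(t) − i_dq(t)| − (2η/3)|i_f(t)| | ≤ √m·e^{−(ρ/2)t}·|î_αβ(0) − i_αβ(0)|` for `t ≥ 0`,
and the difference tends to `0` exponentially fast. -/
theorem stmt_4
    (Rs Ld Lq φ η : ℝ)
    (hRs : 0 < Rs) (hLd : 0 < Ld) (hLq : 0 < Lq)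
    (hη : η ∈ Set.Icc (0:ℝ) 1)
    (iD iQ iF θ ω vd vq : ℝ → ℝ)
    (iD' iQ' iF' : ℝ → ℝ)
    (hθ : ∀ t, HasDerivAt θ (ω t) t)
    (hω : Differentiable ℝ ω) (hvd : Differentiable ℝ vd) (hvq : Differentiable ℝ vq)
    (hiF : ∀ t, HasDerivAt iF (iF' t) t)
    (hiD : ∀ t, HasDerivAt iD (iD' t) t)
    (hiQ : ∀ t, HasDerivAt iQ (iQ' t) t)
    (ed eq : ℝ → ℝ)
    (hed : ∀ t, ed t = (2 * η / 3) *
      ((-Rs * Real.cos (θ t) + ω t * (Ld - Lq) * Real.sin (θ t)) * iF t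
        - Ld * Real.cos (θ t) * iF' t))
    (heq : ∀ t, eq t = (2 * η / 3) *
      ((Rs * Real.sin (θ t) - ω t * (Ld - Lq) * Real.cos (θ t)) * iF t
        + Lq * Real.sin (θ t) * iF' t))
    (hdynD : ∀ t, Ld * iD' t = -Rs * iD t + ω t * Lq * iQ t + vd t + ed t)
    (hdynQ : ∀ t, Lq * iQ' t = -Rs * iQ t - ω t * Ld * iD t - ω t * φ + vq t + eq t)
    -- the observer `î_αβ = (oα, oβ)`
    (oα oβ oα' oβ' : ℝ → ℝ)
    (hoα : ∀ t, HasDerivAt oα (oα' t) t)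
    (hoβ : ∀ t, HasDerivAt oβ (oβ' t) t)
    (hobsD : ∀ t, Ld * oα' t = -Rs * oα t + ω t * Lq * oβ t + vd t)
    (hobsQ : ∀ t, Lq * oβ' t = -(ω t) * Ld * oα t - Rs * oβ t - ω t * φ + vq t) :
    (∀ t ≥ (0:ℝ),
      abs (Real.sqrt ((oα t - iD t) ^ 2 + (oβ t - iQ t) ^ 2) - (2 * η / 3) * |iF t|)
        ≤ Real.sqrt (max (Ld / Lq) (Lq / Ld) / min (Ld / Lq) (Lq / Ld))
          * Real.exp (-(Rs * min (1 / Lq) (1 / Ld)) / 2 * t)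
          * Real.sqrt ((oα 0 - (iD 0 + (2 * η / 3) * Real.cos (θ 0) * iF 0)) ^ 2
              + (oβ 0 - (iQ 0 - (2 * η / 3) * Real.sin (θ 0) * iF 0)) ^ 2)) ∧
    Filter.Tendsto
      (fun t => Real.sqrt ((oα t - iD t) ^ 2 + (oβ t - iQ t) ^ 2) - (2 * η / 3) * |iF t|)
      Filter.atTop (nhds 0) := by
  obtain ⟨hη0, hη1⟩ := hη
  set c : ℝ := 2 * η / 3 with hc
  have hc0 : 0 ≤ c := by positivity
  set ρ : ℝ := Rs * min (1 / Lq) (1 / Ld) with hρ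
  have hρ0 : 0 < ρ := by
    apply mul_pos hRs; positivity
  have hρLd : ρ * Ld ≤ Rs := by
    have : ρ ≤ Rs * (1 / Ld) := mul_le_mul_of_nonneg_left (min_le_right _ _) hRs.le
    calc ρ * Ld ≤ Rs * (1 / Ld) * Ld := mul_le_mul_of_nonneg_right this hLd.le
      _ = Rs := by field_simp
  have hρLq : ρ * Lq ≤ Rs := by
    have : ρ ≤ Rs * (1 / Lq) := mul_le_mul_of_nonneg_left (min_le_left _ _) hRs.le
    calc ρ * Lq ≤ Rs * (1 / Lq) * Lq := mul_le_mul_of_nonneg_right this hLq.le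
      _ = Rs := by field_simp
  -- error coordinates
  set X : ℝ → ℝ := fun t => oα t - (iD t + c * (Real.cos (θ t) * iF t)) with hX
  set Y : ℝ → ℝ := fun t => oβ t - (iQ t - c * (Real.sin (θ t) * iF t)) with hY
  set X' : ℝ → ℝ := fun t =>
    oα' t - (iD' t + c * (-Real.sin (θ t) * ω t * iF t + Real.cos (θ t) * iF' t)) with hX'
  set Y' : ℝ → ℝ := fun t =>
    oβ' t - (iQ' t - c * (Real.cos (θ t) * ω t * iF t + Real.sin (θ t) * iF' t)) with hY'
  have hXd : ∀ t, HasDerivAt X (X' t) t := by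
    intro t
    have hcos : HasDerivAt (fun s => Real.cos (θ s)) (-Real.sin (θ t) * ω t) t :=
      (Real.hasDerivAt_cos (θ t)).comp t (hθ t)
    have hsin : HasDerivAt (fun s => Real.sin (θ s)) (Real.cos (θ t) * ω t) t :=
      (Real.hasDerivAt_sin (θ t)).comp t (hθ t)
    exact (hoα t).sub ((hiD t).add ((hcos.mul (hiF t)).const_mul c))
  have hYd : ∀ t, HasDerivAt Y (Y' t) t := by
    intro t
    have hsin : HasDerivAt (fun s => Real.sin (θ s)) (Real.cos (θ t) * ω t) t :=
      (Real.hasDerivAt_sin (θ t)).comp t (hθ t)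
    exact (hoβ t).sub ((hiQ t).sub ((hsin.mul (hiF t)).const_mul c))
  -- the error dynamics
  have claimA : ∀ t, Ld * X' t = -Rs * X t + ω t * Lq * Y t := by
    intro t
    simp only [hX, hX', hY]
    linear_combination hobsD t - hdynD t - hed t
  have claimB : ∀ t, Lq * Y' t = -(ω t) * Ld * X t - Rs * Y t := by
    intro t
    simp only [hX, hY, hY']
    linear_combination hobsQ t - hdynQ t - heq t
  -- Lyapunov function
  set V : ℝ → ℝ := fun t => Ld^2 * X t ^ 2 + Lq^2 * Y t ^ 2 with hV
  set V' : ℝ → ℝ := fun t => Ld^2 * (2 * X t ^ 1 * X' t) + Lq^2 * (2 * Y t ^ 1 * Y' t) with hV'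
  have hVd : ∀ t, HasDerivAt V (V' t) t := fun t =>
    (((hXd t).pow 2).const_mul (Ld^2)).add (((hYd t).pow 2).const_mul (Lq^2))
  have hVkey : ∀ t, V' t + ρ * V t ≤ 0 := by
    intro t
    have e1 := claimA t
    have e2 := claimB t
    have hVeq : V' t = -2 * Rs * (Ld * X t ^ 2 + Lq * Y t ^ 2) := by
      simp only [hV']
      linear_combination (2 * Ld * X t) * e1 + (2 * Lq * Y t) * e2
    rw [hVeq]
    have h1 : 0 ≤ (Rs - ρ * Ld) * (Ld * X t ^ 2) :=
      mul_nonneg (by linarith) (mul_nonneg hLd.le (sq_nonneg _))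
    have h2 : 0 ≤ (Rs - ρ * Lq) * (Lq * Y t ^ 2) :=
      mul_nonneg (by linarith) (mul_nonneg hLq.le (sq_nonneg _))
    have h3 : 0 ≤ Rs * (Ld * X t ^ 2) := mul_nonneg hRs.le (mul_nonneg hLd.le (sq_nonneg _))
    have h4 : 0 ≤ Rs * (Lq * Y t ^ 2) := mul_nonneg hRs.le (mul_nonneg hLq.le (sq_nonneg _))
    simp only [hV]
    nlinarith [h1, h2, h3, h4]
  have hVbound := gronwall V V' ρ hVd hVkey
  clear_value c ρ X Y X' Y' V V'
  -- constants
  set mmax : ℝ := max Ld Lq with hmmax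
  set mmin : ℝ := min Ld Lq with hmmin
  have hmmin0 : 0 < mmin := lt_min hLd hLq
  have hmmax0 : 0 < mmax := lt_of_lt_of_le hLd (le_max_left _ _)
  have hmratio : max (Ld / Lq) (Lq / Ld) / min (Ld / Lq) (Lq / Ld) = (mmax / mmin)^2 := by
    rcases le_total Ld Lq with h | h
    · have h1 : Ld / Lq ≤ Lq / Ld := by
        rw [div_le_div_iff₀ hLq hLd]; nlinarith
      rw [max_eq_right h1, min_eq_left h1, hmmax, hmmin, max_eq_right h, min_eq_left h]
      field_simp
    · have h1 : Lq / Ld ≤ Ld / Lq := by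
        rw [div_le_div_iff₀ hLd hLq]; nlinarith
      rw [max_eq_left h1, min_eq_right h1, hmmax, hmmin, max_eq_left h, min_eq_right h]
      field_simp
  have hsqrtm : Real.sqrt (max (Ld / Lq) (Lq / Ld) / min (Ld / Lq) (Lq / Ld)) = mmax / mmin := by
    rw [hmratio, Real.sqrt_sq (by positivity)]
  set S : ℝ := X 0 ^ 2 + Y 0 ^ 2 with hS
  have hS0 : 0 ≤ S := by positivity
  clear_value mmax mmin S
  -- the main pointwise bound
  have main : ∀ t ≥ (0:ℝ),
      abs (Real.sqrt ((oα t - iD t) ^ 2 + (oβ t - iQ t) ^ 2) - c * |iF t|)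
        ≤ (mmax / mmin) * Real.exp (-ρ / 2 * t) * Real.sqrt S := by
    intro t ht
    -- step 1: reverse triangle inequality
    have step1 : abs (Real.sqrt ((oα t - iD t) ^ 2 + (oβ t - iQ t) ^ 2) - c * |iF t|)
        ≤ Real.sqrt (X t ^ 2 + Y t ^ 2) := by
      have key := abs_sqrt_sub_sqrt (oα t - iD t) (oβ t - iQ t)
        (c * (Real.cos (θ t) * iF t)) (-(c * (Real.sin (θ t) * iF t)))
      have hw : Real.sqrt ((c * (Real.cos (θ t) * iF t))^2
          + (-(c * (Real.sin (θ t) * iF t)))^2) = c * |iF t| := by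
        have hid : (c * (Real.cos (θ t) * iF t))^2 + (-(c * (Real.sin (θ t) * iF t)))^2
            = (c * iF t)^2 := by
          linear_combination (c^2 * iF t ^ 2) * (Real.sin_sq_add_cos_sq (θ t))
        rw [hid, Real.sqrt_sq_eq_abs, abs_mul, abs_of_nonneg hc0]
      have hXe : oα t - iD t - c * (Real.cos (θ t) * iF t) = X t := by simp [hX]; ring
      have hYe : oβ t - iQ t - -(c * (Real.sin (θ t) * iF t)) = Y t := by simp [hY]; ring
      rw [hw, hXe, hYe] at key
      exact key
    -- step 2: exponential bound on the error norm
    have hVt := hVbound t ht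
    have hVlow : mmin^2 * (X t ^ 2 + Y t ^ 2) ≤ V t := by
      have h1 : mmin^2 ≤ Ld^2 :=
        pow_le_pow_left₀ hmmin0.le (by rw [hmmin]; exact min_le_left _ _) 2
      have h2 : mmin^2 ≤ Lq^2 :=
        pow_le_pow_left₀ hmmin0.le (by rw [hmmin]; exact min_le_right _ _) 2
      have h3 := add_le_add (mul_le_mul_of_nonneg_right h1 (sq_nonneg (X t)))
        (mul_le_mul_of_nonneg_right h2 (sq_nonneg (Y t)))
      simp only [hV]
      linarith only [h3]
    have hVhigh : V 0 ≤ mmax^2 * S := by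
      have h1 : Ld^2 ≤ mmax^2 :=
        pow_le_pow_left₀ hLd.le (by rw [hmmax]; exact le_max_left _ _) 2
      have h2 : Lq^2 ≤ mmax^2 :=
        pow_le_pow_left₀ hLq.le (by rw [hmmax]; exact le_max_right _ _) 2
      have h3 := add_le_add (mul_le_mul_of_nonneg_right h1 (sq_nonneg (X 0)))
        (mul_le_mul_of_nonneg_right h2 (sq_nonneg (Y 0)))
      simp only [hV, hS]
      linarith only [h3]
    have hexp0 : (0:ℝ) ≤ Real.exp (-ρ * t) := Real.exp_nonneg _
    have key2 : X t ^ 2 + Y t ^ 2 ≤ (mmax / mmin)^2 * Real.exp (-ρ * t) * S := by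
      have h5 : mmin^2 * (X t ^ 2 + Y t ^ 2) ≤ mmax^2 * Real.exp (-ρ * t) * S := by
        calc mmin^2 * (X t ^ 2 + Y t ^ 2) ≤ V t := hVlow
          _ ≤ V 0 * Real.exp (-ρ * t) := hVt
          _ ≤ (mmax^2 * S) * Real.exp (-ρ * t) :=
              mul_le_mul_of_nonneg_right hVhigh hexp0
          _ = mmax^2 * Real.exp (-ρ * t) * S := by ring
      rw [div_pow]
      rw [div_mul_eq_mul_div, div_mul_eq_mul_div, le_div_iff₀ (by positivity)]
      linarith
    calc abs (Real.sqrt ((oα t - iD t) ^ 2 + (oβ t - iQ t) ^ 2) - c * |iF t|)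
        ≤ Real.sqrt (X t ^ 2 + Y t ^ 2) := step1
      _ ≤ Real.sqrt ((mmax / mmin)^2 * Real.exp (-ρ * t) * S) := Real.sqrt_le_sqrt key2
      _ = (mmax / mmin) * Real.exp (-ρ / 2 * t) * Real.sqrt S := by
          rw [Real.sqrt_mul (by positivity), Real.sqrt_mul (by positivity),
            Real.sqrt_sq (by positivity)]
          congr 1
          rw [show -ρ * t = (-ρ / 2 * t) + (-ρ / 2 * t) by ring, Real.exp_add, ← sq,
            Real.sqrt_sq (Real.exp_nonneg _)]
  constructor
  · intro t ht
    have := main t ht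
    rw [hsqrtm]
    have hSe : (oα 0 - (iD 0 + c * Real.cos (θ 0) * iF 0)) ^ 2
        + (oβ 0 - (iQ 0 - c * Real.sin (θ 0) * iF 0)) ^ 2 = S := by
      rw [hS, hX, hY]; ring
    rw [hSe]
    exact this
  · have htend : Tendsto (fun t => (mmax / mmin) * Real.exp (-ρ / 2 * t) * Real.sqrt S)
        atTop (nhds 0) := by
      have h1 : Tendsto (fun t : ℝ => -ρ / 2 * t) atTop atBot := by
        apply Tendsto.const_mul_atTop_of_neg (by linarith) tendsto_id
      have h2 : Tendsto (fun t : ℝ => Real.exp (-ρ / 2 * t)) atTop (nhds 0) :=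
        Real.tendsto_exp_atBot.comp h1
      have := (h2.const_mul (mmax / mmin)).mul_const (Real.sqrt S)
      simpa using this
    apply squeeze_zero_norm' _ htend
    filter_upwards [eventually_ge_atTop (0:ℝ)] with t ht
    simpa [Real.norm_eq_abs] using main t ht
end

section
/- Let n ≥ 1, let Ψ : ℝ → ℝⁿ be continuous, Θ ∈ ℝⁿ a constant vector, y(t) := Ψ(t)ᵀΘ, γ > 0, G ∈ ℝ^{n×n}, F₀ ∈ ℝ^{n×n} invertible, and χ : ℝ → ℝ continuous. Suppose Θ̂ : ℝ → ℝⁿ, F : ℝ → ℝ^{n×n}, z : ℝ → ℝ are differentiable and satisfy Θ̂' = γ·F·G·Ψ·(y − ΨᵀΘ̂), F' = −γ·F·G·Ψ·Ψᵀ·F + χ·F with F(0) = F₀, and z' = −χ·z with z(0) = 1. Then for all t ≥ 0, Θ̂(t) − Θ = z(t)·F(t)·F₀⁻¹·(Θ̂(0) − Θ). -/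
open Matrix Set

/-- fundamental error identity of the least-squares estimator with
forgetting factor: `Θ̂(t) − Θ = z(t)·F(t)·F₀⁻¹·(Θ̂(0) − Θ)` for all `t ≥ 0`. -/
theorem stmt_6
    (n : ℕ) (hn : 1 ≤ n)
    (Θ : Fin n → ℝ) (Ψ : ℝ → Fin n → ℝ) (hΨ : Continuous Ψ)
    (y : ℝ → ℝ) (hy : ∀ t, y t = Ψ t ⬝ᵥ Θ)
    (γ : ℝ) (hγ : 0 < γ)
    (G F₀ : Matrix (Fin n) (Fin n) ℝ) (hF₀ : IsUnit F₀.det)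
    (χ : ℝ → ℝ) (hχ : Continuous χ)
    (Θhat : ℝ → Fin n → ℝ) (F : ℝ → Matrix (Fin n) (Fin n) ℝ) (z : ℝ → ℝ)
    (hΘhat : ∀ t i, HasDerivAt (fun s => Θhat s i)
      (((γ * (y t - Ψ t ⬝ᵥ Θhat t)) • ((F t * G) *ᵥ Ψ t)) i) t)
    (hF : ∀ t i j, HasDerivAt (fun s => F s i j)
      (((-γ) • (F t * G * vecMulVec (Ψ t) (Ψ t) * F t) + χ t • F t) i j) t)
    (hF0 : F 0 = F₀)
    (hz : ∀ t, HasDerivAt z (-(χ t) * z t) t) (hz0 : z 0 = 1) :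
    ∀ t ≥ (0:ℝ), Θhat t - Θ = z t • ((F t * F₀⁻¹) *ᵥ (Θhat 0 - Θ)) := by
  intro T hT
  -- notation
  set e0 : Fin n → ℝ := Θhat 0 - Θ with he0
  set w : Fin n → ℝ := F₀⁻¹ *ᵥ e0 with hw
  set u : ℝ → Fin n → ℝ := fun s => (F s * G) *ᵥ Ψ s with hudef
  set v : ℝ → (Fin n → ℝ) → (Fin n → ℝ) :=
    fun s x => (-(γ * (Ψ s ⬝ᵥ x))) • u s with hvdef
  set f : ℝ → Fin n → ℝ := fun r => Θhat r - Θ with hfdef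
  set g : ℝ → Fin n → ℝ := fun r => z r • (F r *ᵥ w) with hgdef
  -- key vecMulVec identity
  have hvmv : ∀ (a b x : Fin n → ℝ), vecMulVec a b *ᵥ x = (b ⬝ᵥ x) • a := by
    intro a b x
    funext i
    simp only [mulVec, dotProduct, vecMulVec_apply, Pi.smul_apply, smul_eq_mul, Finset.sum_mul]
    exact Finset.sum_congr rfl fun j _ => by ring
  -- f satisfies the ODE
  have hde : ∀ s, HasDerivAt f (v s (f s)) s := by
    intro s
    rw [hasDerivAt_pi]
    intro i
    have h1 := (hΘhat s i).sub_const (Θ i)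
    have : ((γ * (y s - Ψ s ⬝ᵥ Θhat s)) • ((F s * G) *ᵥ Ψ s)) i = (v s (f s)) i := by
      simp only [hvdef, hfdef, Pi.smul_apply, smul_eq_mul, hy, dotProduct_sub, hudef]
      ring_nf
    rw [this] at h1
    exact h1
  -- g satisfies the ODE
  have hdg : ∀ s, HasDerivAt g (v s (g s)) s := by
    intro s
    rw [hasDerivAt_pi]
    intro i
    have hFw : ∀ r, (F r *ᵥ w) i = ∑ k, F r i k * w k := by
      intro r; simp [mulVec, dotProduct]
    have h1 : HasDerivAt (fun r => z r * ∑ k, F r i k * w k)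
        ((-(χ s) * z s) * (∑ k, F s i k * w k) +
          z s * ∑ k, (((-γ) • (F s * G * vecMulVec (Ψ s) (Ψ s) * F s) + χ s • F s) i k) * w k)
        s := (hz s).mul (HasDerivAt.fun_sum fun k _ => (hF s i k).mul_const (w k))
    have hfun : (fun r => z r * ∑ k, F r i k * w k) = fun r => g r i := by
      funext r; simp [hgdef, hFw]
    rw [hfun] at h1
    have hval : (-(χ s) * z s) * (∑ k, F s i k * w k) +
          z s * ∑ k, (((-γ) • (F s * G * vecMulVec (Ψ s) (Ψ s) * F s) + χ s • F s) i k) * w k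
        = (v s (g s)) i := by
      have hsum : ∑ k, (((-γ) • (F s * G * vecMulVec (Ψ s) (Ψ s) * F s) + χ s • F s) i k) * w k
          = (((-γ) • (F s * G * vecMulVec (Ψ s) (Ψ s) * F s) + χ s • F s) *ᵥ w) i := by
        simp [mulVec, dotProduct]
      rw [hsum]
      have hmv : ((-γ) • (F s * G * vecMulVec (Ψ s) (Ψ s) * F s) + χ s • F s) *ᵥ w
          = (-γ) • ((Ψ s ⬝ᵥ (F s *ᵥ w)) • u s) + χ s • (F s *ᵥ w) := by
        rw [add_mulVec, smul_mulVec, smul_mulVec]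
        congr 1
        congr 1
        rw [Matrix.mul_assoc (F s * G) _ (F s),
          ← Matrix.mulVec_mulVec w (F s * G) (vecMulVec (Ψ s) (Ψ s) * F s),
          ← Matrix.mulVec_mulVec w (vecMulVec (Ψ s) (Ψ s)) (F s),
          hvmv, mulVec_smul]
      rw [hmv]
      simp only [hvdef, hgdef, Pi.add_apply, Pi.smul_apply, smul_eq_mul, dotProduct_smul]
      rw [← hFw s]
      ring
    rw [hval] at h1
    exact h1
  -- initial values agree
  have h0 : f 0 = g 0 := by
    simp only [hfdef, hgdef, hz0, one_smul, hF0, hw, Matrix.mulVec_mulVec,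
      Matrix.mul_nonsing_inv _ hF₀, one_mulVec, he0]
  -- continuity facts
  have hFc : ∀ i j, Continuous fun s => F s i j := by
    intro i j
    exact continuous_iff_continuousAt.2 fun s => (hF s i j).continuousAt
  have hΨi : ∀ i, Continuous fun s => Ψ s i := fun i => (continuous_apply i).comp hΨ
  have huc : Continuous u := by
    apply continuous_pi
    intro i
    have : (fun s => u s i) = fun s => ∑ k, (∑ j, F s i j * G j k) * Ψ s k := by
      funext s; simp [hudef, mulVec, dotProduct, Matrix.mul_apply]
    rw [this]
    exact continuous_finset_sum _ fun k _ =>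
      (continuous_finset_sum _ fun j _ => (hFc i j).mul continuous_const).mul (hΨi k)
  -- Lipschitz bound on [0, T]
  set B : ℝ → ℝ := fun s => γ * (∑ i, |Ψ s i|) * ‖u s‖ with hBdef
  have hBc : Continuous B :=
    ((continuous_const.mul (continuous_finset_sum _ fun i _ => (hΨi i).abs)).mul huc.norm)
  obtain ⟨s₀, hs₀, hmax⟩ := (isCompact_Icc : IsCompact (Icc (0:ℝ) T)).exists_isMaxOn
    (nonempty_Icc.2 hT) hBc.continuousOn
  set K : NNReal := Real.toNNReal (B s₀) with hKdef
  have hlip : ∀ s ∈ Icc (0:ℝ) T, LipschitzWith K (v s) := by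
    intro s hs
    apply LipschitzWith.of_dist_le_mul
    intro x x'
    rw [dist_eq_norm, dist_eq_norm]
    have hdiff : v s x - v s x' = (-(γ * (Ψ s ⬝ᵥ (x - x')))) • u s := by
      simp only [hvdef, dotProduct_sub]
      rw [← sub_smul]
      ring_nf
    rw [hdiff, norm_smul]
    have hdot : |Ψ s ⬝ᵥ (x - x')| ≤ (∑ i, |Ψ s i|) * ‖x - x'‖ := by
      calc |Ψ s ⬝ᵥ (x - x')| ≤ ∑ i, |Ψ s i * (x - x') i| :=
            Finset.abs_sum_le_sum_abs _ _
        _ ≤ ∑ i, |Ψ s i| * ‖x - x'‖ := by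
            apply Finset.sum_le_sum
            intro i _
            rw [abs_mul]
            exact mul_le_mul_of_nonneg_left ((norm_le_pi_norm (x - x') i)) (abs_nonneg _)
        _ = (∑ i, |Ψ s i|) * ‖x - x'‖ := by rw [Finset.sum_mul]
    have hBs : B s ≤ (K : ℝ) := le_trans (hmax hs) (Real.le_coe_toNNReal _)
    calc ‖(-(γ * (Ψ s ⬝ᵥ (x - x'))))‖ * ‖u s‖
          = γ * |Ψ s ⬝ᵥ (x - x')| * ‖u s‖ := by
            rw [Real.norm_eq_abs, abs_neg, abs_mul, abs_of_pos hγ]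
        _ ≤ γ * ((∑ i, |Ψ s i|) * ‖x - x'‖) * ‖u s‖ := by
            apply mul_le_mul_of_nonneg_right _ (norm_nonneg _)
            exact mul_le_mul_of_nonneg_left hdot (le_of_lt hγ)
        _ = B s * ‖x - x'‖ := by rw [hBdef]; ring
        _ ≤ (K : ℝ) * ‖x - x'‖ := mul_le_mul_of_nonneg_right hBs (norm_nonneg _)
  -- truncated vector field, Lipschitz everywhere
  set vt : ℝ → (Fin n → ℝ) → (Fin n → ℝ) :=
    fun s x => if s ∈ Icc (0:ℝ) T then v s x else 0 with hvtdef
  have hlip' : ∀ s, LipschitzWith K (vt s) := by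
    intro s
    by_cases hs : s ∈ Icc (0:ℝ) T
    · simp only [hvtdef, if_pos hs]
      exact hlip s hs
    · simp only [hvtdef, if_neg hs]
      exact (LipschitzWith.const (0 : Fin n → ℝ)).weaken zero_le
  -- apply uniqueness on [0, T]
  have key : EqOn f g (Icc 0 T) := by
    apply ODE_solution_unique_of_mem_Icc_right (v := vt) (s := fun _ => univ)
      (fun s _ => (hlip' s).lipschitzOnWith)
      (fun s _ => ((hde s).continuousAt).continuousWithinAt) ?_ (fun _ _ => trivial)
      (fun s _ => ((hdg s).continuousAt).continuousWithinAt) ?_ (fun _ _ => trivial) h0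
    · intro t ht
      rw [hvtdef]
      simp only [if_pos (Ico_subset_Icc_self ht)]
      exact (hde t).hasDerivWithinAt
    · intro t ht
      rw [hvtdef]
      simp only [if_pos (Ico_subset_Icc_self ht)]
      exact (hdg t).hasDerivWithinAt
  have := key (right_mem_Icc.2 hT)
  simp only [hfdef, hgdef] at this
  rw [this, hw, Matrix.mulVec_mulVec]
end

section
/- Swapping lemma in ODE form: Let λ > 0 and let w, v : ℝ → ℝ be continuous with v differentiable with continuous derivative. Let x, y, q : ℝ → ℝ be the solutions of x' = −λ·x + λ·w·v, y' = −λ·y + λ·w, and q' = −λ·q + y·v', all with zero initial conditions at t = 0. Then x(t) = y(t)·v(t) − q(t) for all t ≥ 0; that is, 𝓕[w·v] = 𝓕[w]·v − 𝓕[(1/λ)·𝓕[w]·v̇] where 𝓕(p) = λ/(p+λ). -/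
/-- swapping lemma in ODE form. If `x' = −λx + λwv`, `y' = −λy + λw`
and `q' = −λq + y·v'`, all with zero initial conditions at `t = 0`, then
`x(t) = y(t)·v(t) − q(t)` for all `t ≥ 0`; i.e. `𝓕[wv] = 𝓕[w]·v − 𝓕[(1/λ)𝓕[w]·v̇]`. -/
theorem stmt_15
    (lam : ℝ) (hlam : 0 < lam)
    (w v v' : ℝ → ℝ)
    (hw : Continuous w)
    (hv : ∀ t, HasDerivAt v (v' t) t) (hv' : Continuous v')
    (x y q : ℝ → ℝ)
    (hx : ∀ t, HasDerivAt x (-lam * x t + lam * (w t * v t)) t) (hx0 : x 0 = 0)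
    (hy : ∀ t, HasDerivAt y (-lam * y t + lam * w t) t) (hy0 : y 0 = 0)
    (hq : ∀ t, HasDerivAt q (-lam * q t + y t * v' t) t) (hq0 : q 0 = 0) :
    ∀ t ≥ (0:ℝ), x t = y t * v t - q t := by
  set z : ℝ → ℝ := fun t => y t * v t - q t - x t with hzdef
  have hz : ∀ t, HasDerivAt z (-lam * z t) t := by
    intro t
    have h1 := ((hy t).mul (hv t)).sub (hq t)
    have h2 := h1.sub (hx t)
    refine h2.congr_deriv ?_
    simp only [hzdef]
    ring
  have hf : ∀ t, HasDerivAt (fun t => z t * Real.exp (lam * t)) 0 t := by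
    intro t
    have he : HasDerivAt (fun t => Real.exp (lam * t)) (lam * Real.exp (lam * t)) t := by
      have := (Real.hasDerivAt_exp (lam * t)).comp t ((hasDerivAt_id t).const_mul lam)
      simpa [mul_comm, Function.comp_def] using this
    have := (hz t).mul he
    refine this.congr_deriv ?_
    ring
  have hconst : ∀ t : ℝ, z t * Real.exp (lam * t) = z 0 * Real.exp (lam * 0) := by
    intro t
    apply is_const_of_deriv_eq_zero (f := fun t => z t * Real.exp (lam * t))
    · exact fun s => (hf s).differentiableAt
    · exact fun s => (hf s).deriv
  intro t ht
  have hz0 : z 0 = 0 := by simp [hzdef, hx0, hy0, hq0]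
  have h := hconst t
  rw [hz0] at h
  simp at h
  have : z t = 0 := h
  simp only [hzdef] at this
  linarith
end

section
/- Let R_s, L_d, L_q > 0 and let ω : ℝ → ℝ be continuous. Let Φ : ℝ → ℝ^{2×2} be the solution of Φ' = 𝒜(t)·Φ with Φ(0) = I₂, where 𝒜(t) = Q⁻¹·A(t), Q := diag(L_d, L_q), A(t) := [[−R_s, ω(t)·L_q], [−ω(t)·L_d, −R_s]]. Then for every x ∈ ℝ² and all t ≥ 0, |Φ(t)·x|² ≤ m·e^{−ρ t}·|x|², where m := max{L_d/L_q, L_q/L_d} / min{L_d/L_q, L_q/L_d} and ρ := R_s·min{1/L_q, 1/L_d}; in particular Φ(t) → 0 as t → ∞. -/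
open Matrix

set_option maxHeartbeats 1000000

/-- the state-transition matrix `Φ` of the homogeneous LTV system
`ẋ = Q⁻¹A(t)x` satisfies `|Φ(t)x|² ≤ m·e^{−ρt}·|x|²` for all `x ∈ ℝ²` and `t ≥ 0`,
with `m = max{L_d/L_q, L_q/L_d}/min{L_d/L_q, L_q/L_d}` and `ρ = R_s·min{1/L_q, 1/L_d}`;
in particular `Φ(t) → 0` as `t → ∞`. -/
theorem stmt_16
    (Rs Ld Lq : ℝ) (hRs : 0 < Rs) (hLd : 0 < Ld) (hLq : 0 < Lq)
    (ω : ℝ → ℝ) (hω : Continuous ω)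
    (Φ : ℝ → Matrix (Fin 2) (Fin 2) ℝ)
    (hΦ : ∀ t i j, HasDerivAt (fun s => Φ s i j)
      ((!![-Rs / Ld, ω t * Lq / Ld; -(ω t) * Ld / Lq, -Rs / Lq] * Φ t) i j) t)
    (hΦ0 : Φ 0 = 1) :
    (∀ x : Fin 2 → ℝ, ∀ t ≥ (0:ℝ),
      ((Φ t *ᵥ x) 0) ^ 2 + ((Φ t *ᵥ x) 1) ^ 2
        ≤ (max (Ld / Lq) (Lq / Ld) / min (Ld / Lq) (Lq / Ld))
          * Real.exp (-(Rs * min (1 / Lq) (1 / Ld)) * t)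
          * ((x 0) ^ 2 + (x 1) ^ 2)) ∧
    (∀ i j, Filter.Tendsto (fun t => Φ t i j) Filter.atTop (nhds 0)) := by
  have hρ : 0 < Rs * min (1 / Lq) (1 / Ld) := by positivity
  set ρ := Rs * min (1 / Lq) (1 / Ld) with hρdef
  -- scalar derivatives of the components of Φ t *ᵥ x
  have hd0 : ∀ (x : Fin 2 → ℝ) (t : ℝ),
      HasDerivAt (fun s => (Φ s *ᵥ x) 0)
        ((-Rs / Ld) * (Φ t *ᵥ x) 0 + (ω t * Lq / Ld) * (Φ t *ᵥ x) 1) t := by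
    intro x t
    have e0 : (fun s => (Φ s *ᵥ x) 0) = fun s => Φ s 0 0 * x 0 + Φ s 0 1 * x 1 := by
      funext s; simp [Matrix.mulVec, dotProduct, Fin.sum_univ_two]
    rw [e0]
    have h := ((hΦ t 0 0).mul_const (x 0)).add ((hΦ t 0 1).mul_const (x 1))
    refine h.congr_deriv ?_
    simp [Matrix.mul_apply, Matrix.mulVec, dotProduct, Fin.sum_univ_two]
    ring
  have hd1 : ∀ (x : Fin 2 → ℝ) (t : ℝ),
      HasDerivAt (fun s => (Φ s *ᵥ x) 1)
        ((-(ω t) * Ld / Lq) * (Φ t *ᵥ x) 0 + (-Rs / Lq) * (Φ t *ᵥ x) 1) t := by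
    intro x t
    have e1 : (fun s => (Φ s *ᵥ x) 1) = fun s => Φ s 1 0 * x 0 + Φ s 1 1 * x 1 := by
      funext s; simp [Matrix.mulVec, dotProduct, Fin.sum_univ_two]
    rw [e1]
    have h := ((hΦ t 1 0).mul_const (x 0)).add ((hΦ t 1 1).mul_const (x 1))
    refine h.congr_deriv ?_
    simp [Matrix.mul_apply, Matrix.mulVec, dotProduct, Fin.sum_univ_two]
    ring
  -- the key Lyapunov estimate
  have key : ∀ (x : Fin 2 → ℝ) (t : ℝ), 0 ≤ t →
      Real.exp (ρ * t) * (Ld ^ 2 * ((Φ t *ᵥ x) 0) ^ 2 + Lq ^ 2 * ((Φ t *ᵥ x) 1) ^ 2)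
        ≤ Ld ^ 2 * (x 0) ^ 2 + Lq ^ 2 * (x 1) ^ 2 := by
    intro x t ht
    have hg : ∀ s : ℝ, HasDerivAt
        (fun s => Real.exp (ρ * s) * (Ld ^ 2 * ((Φ s *ᵥ x) 0) ^ 2 + Lq ^ 2 * ((Φ s *ᵥ x) 1) ^ 2))
        (Real.exp (ρ * s) * (ρ * (Ld ^ 2 * ((Φ s *ᵥ x) 0) ^ 2 + Lq ^ 2 * ((Φ s *ᵥ x) 1) ^ 2)
          + (Ld ^ 2 * (2 * (Φ s *ᵥ x) 0 *
              ((-Rs / Ld) * (Φ s *ᵥ x) 0 + (ω s * Lq / Ld) * (Φ s *ᵥ x) 1))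
            + Lq ^ 2 * (2 * (Φ s *ᵥ x) 1 *
              ((-(ω s) * Ld / Lq) * (Φ s *ᵥ x) 0 + (-Rs / Lq) * (Φ s *ᵥ x) 1))))) s := by
      intro s
      have hexp : HasDerivAt (fun s : ℝ => Real.exp (ρ * s)) (Real.exp (ρ * s) * ρ) s := by
        have := ((hasDerivAt_id s).const_mul ρ).exp
        simpa using this
      have hp := (hd0 x s).const_mul (Ld ^ 2)
      have hq := (hd1 x s).const_mul (Lq ^ 2)
      have hV := ((((hd0 x s).pow 2).const_mul (Ld ^ 2)).add
        (((hd1 x s).pow 2).const_mul (Lq ^ 2)))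
      have := hexp.mul hV
      refine this.congr_deriv ?_
      simp only [Pi.add_apply, Pi.pow_apply]
      ring
    -- the derivative is nonpositive
    have hD : ∀ s : ℝ, deriv (fun s => Real.exp (ρ * s) *
        (Ld ^ 2 * ((Φ s *ᵥ x) 0) ^ 2 + Lq ^ 2 * ((Φ s *ᵥ x) 1) ^ 2)) s ≤ 0 := by
      intro s
      rw [(hg s).deriv]
      have hE := Real.exp_pos (ρ * s)
      have hm1 : min (1 / Lq) (1 / Ld) * Ld ≤ 1 := by
        calc min (1 / Lq) (1 / Ld) * Ld ≤ (1 / Ld) * Ld :=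
              mul_le_mul_of_nonneg_right (min_le_right _ _) hLd.le
          _ = 1 := by field_simp
      have hm2 : min (1 / Lq) (1 / Ld) * Lq ≤ 1 := by
        calc min (1 / Lq) (1 / Ld) * Lq ≤ (1 / Lq) * Lq :=
              mul_le_mul_of_nonneg_right (min_le_left _ _) hLq.le
          _ = 1 := by field_simp
      have heq : (ρ * (Ld ^ 2 * ((Φ s *ᵥ x) 0) ^ 2 + Lq ^ 2 * ((Φ s *ᵥ x) 1) ^ 2)
          + (Ld ^ 2 * (2 * (Φ s *ᵥ x) 0 *
              ((-Rs / Ld) * (Φ s *ᵥ x) 0 + (ω s * Lq / Ld) * (Φ s *ᵥ x) 1))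
            + Lq ^ 2 * (2 * (Φ s *ᵥ x) 1 *
              ((-(ω s) * Ld / Lq) * (Φ s *ᵥ x) 0 + (-Rs / Lq) * (Φ s *ᵥ x) 1))))
          = Rs * min (1 / Lq) (1 / Ld)
              * (Ld ^ 2 * ((Φ s *ᵥ x) 0) ^ 2 + Lq ^ 2 * ((Φ s *ᵥ x) 1) ^ 2)
            - 2 * Rs * (Ld * ((Φ s *ᵥ x) 0) ^ 2 + Lq * ((Φ s *ᵥ x) 1) ^ 2) := by
        rw [hρdef]; field_simp; ring
      rw [heq]
      have h1 : 0 ≤ Rs * (Ld * ((Φ s *ᵥ x) 0) ^ 2 * (1 - min (1 / Lq) (1 / Ld) * Ld)) := by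
        have := sub_nonneg.2 hm1
        positivity
      have h2 : 0 ≤ Rs * (Lq * ((Φ s *ᵥ x) 1) ^ 2 * (1 - min (1 / Lq) (1 / Ld) * Lq)) := by
        have := sub_nonneg.2 hm2
        positivity
      have h3 : 0 ≤ Rs * (Ld * ((Φ s *ᵥ x) 0) ^ 2) := by positivity
      have h4 : 0 ≤ Rs * (Lq * ((Φ s *ᵥ x) 1) ^ 2) := by positivity
      have hW : Rs * min (1 / Lq) (1 / Ld)
            * (Ld ^ 2 * ((Φ s *ᵥ x) 0) ^ 2 + Lq ^ 2 * ((Φ s *ᵥ x) 1) ^ 2)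
          - 2 * Rs * (Ld * ((Φ s *ᵥ x) 0) ^ 2 + Lq * ((Φ s *ᵥ x) 1) ^ 2) ≤ 0 := by
        nlinarith [h1, h2, h3, h4]
      exact mul_nonpos_of_nonneg_of_nonpos hE.le hW
    have hanti : Antitone (fun s => Real.exp (ρ * s) *
        (Ld ^ 2 * ((Φ s *ᵥ x) 0) ^ 2 + Lq ^ 2 * ((Φ s *ᵥ x) 1) ^ 2)) :=
      antitone_of_deriv_nonpos (fun s => (hg s).differentiableAt) hD
    have := hanti ht
    simpa [hΦ0, Matrix.one_mulVec] using this
  constructor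
  · -- main inequality
    intro x t ht
    have hb := key x t ht
    set p := (Φ t *ᵥ x) 0
    set q := (Φ t *ᵥ x) 1
    have hm : max (Ld / Lq) (Lq / Ld) / min (Ld / Lq) (Lq / Ld)
        = max (Ld ^ 2) (Lq ^ 2) / min (Ld ^ 2) (Lq ^ 2) := by
      rcases le_total Ld Lq with h | h
      · have h1 : Ld / Lq ≤ Lq / Ld := by
          rw [div_le_div_iff₀ hLq hLd]; nlinarith
        have h2 : Ld ^ 2 ≤ Lq ^ 2 := by nlinarith
        rw [max_eq_right h1, min_eq_left h1, max_eq_right h2, min_eq_left h2]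
        field_simp
      · have h1 : Lq / Ld ≤ Ld / Lq := by
          rw [div_le_div_iff₀ hLd hLq]; nlinarith
        have h2 : Lq ^ 2 ≤ Ld ^ 2 := by nlinarith
        rw [max_eq_left h1, min_eq_right h1, max_eq_left h2, min_eq_right h2]
        field_simp
    rw [hm]
    have hmnpos : 0 < min (Ld ^ 2) (Lq ^ 2) := lt_min (by positivity) (by positivity)
    have he' : 0 < Real.exp (-ρ * t) := Real.exp_pos _
    have hEE' : Real.exp (ρ * t) * Real.exp (-ρ * t) = 1 := by
      rw [← Real.exp_add]; ring_nf; exact Real.exp_zero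
    have hchain : Ld ^ 2 * p ^ 2 + Lq ^ 2 * q ^ 2
        ≤ Real.exp (-ρ * t) * (Ld ^ 2 * (x 0) ^ 2 + Lq ^ 2 * (x 1) ^ 2) := by
      have := mul_le_mul_of_nonneg_left hb he'.le
      calc Ld ^ 2 * p ^ 2 + Lq ^ 2 * q ^ 2
          = Real.exp (-ρ * t) * (Real.exp (ρ * t) * (Ld ^ 2 * p ^ 2 + Lq ^ 2 * q ^ 2)) := by
            rw [← mul_assoc, mul_comm (Real.exp (-ρ * t)), hEE', one_mul]
        _ ≤ Real.exp (-ρ * t) * (Ld ^ 2 * (x 0) ^ 2 + Lq ^ 2 * (x 1) ^ 2) := this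
    have hgoal : max (Ld ^ 2) (Lq ^ 2) / min (Ld ^ 2) (Lq ^ 2) * Real.exp (-ρ * t)
          * ((x 0) ^ 2 + (x 1) ^ 2)
        = max (Ld ^ 2) (Lq ^ 2) * Real.exp (-ρ * t) * ((x 0) ^ 2 + (x 1) ^ 2)
            / min (Ld ^ 2) (Lq ^ 2) := by ring
    rw [hgoal, le_div_iff₀ hmnpos]
    have hmn1 : min (Ld ^ 2) (Lq ^ 2) ≤ Ld ^ 2 := min_le_left _ _
    have hmn2 : min (Ld ^ 2) (Lq ^ 2) ≤ Lq ^ 2 := min_le_right _ _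
    have hmx1 : Ld ^ 2 ≤ max (Ld ^ 2) (Lq ^ 2) := le_max_left _ _
    have hmx2 : Lq ^ 2 ≤ max (Ld ^ 2) (Lq ^ 2) := le_max_right _ _
    linarith [mul_le_mul_of_nonneg_right hmn1 (sq_nonneg p),
      mul_le_mul_of_nonneg_right hmn2 (sq_nonneg q),
      mul_le_mul_of_nonneg_left
        (add_le_add (mul_le_mul_of_nonneg_right hmx1 (sq_nonneg (x 0)))
          (mul_le_mul_of_nonneg_right hmx2 (sq_nonneg (x 1)))) he'.le,
      hchain]
  · -- convergence to 0
    intro i j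
    set x : Fin 2 → ℝ := fun k => if k = j then 1 else 0 with hxdef
    have hxval : Ld ^ 2 * (x 0) ^ 2 + Lq ^ 2 * (x 1) ^ 2 ≤ Ld ^ 2 + Lq ^ 2 := by
      fin_cases j <;> simp [hxdef] <;> positivity
    have hΦij : ∀ t : ℝ, (Φ t *ᵥ x) i = Φ t i j := by
      intro t
      fin_cases j <;>
        simp [hxdef, Matrix.mulVec, dotProduct, Fin.sum_univ_two] <;>
        fin_cases i <;> simp
    have hmnpos : 0 < min (Ld ^ 2) (Lq ^ 2) := lt_min (by positivity) (by positivity)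
    have hbnd : ∀ t : ℝ, 0 ≤ t → (Φ t i j) ^ 2
        ≤ (Ld ^ 2 + Lq ^ 2) / min (Ld ^ 2) (Lq ^ 2) * Real.exp (-ρ * t) := by
      intro t ht
      have hb := key x t ht
      have he' : 0 < Real.exp (-ρ * t) := Real.exp_pos _
      have hEE' : Real.exp (ρ * t) * Real.exp (-ρ * t) = 1 := by
        rw [← Real.exp_add]; ring_nf; exact Real.exp_zero
      have hchain : Ld ^ 2 * ((Φ t *ᵥ x) 0) ^ 2 + Lq ^ 2 * ((Φ t *ᵥ x) 1) ^ 2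
          ≤ Real.exp (-ρ * t) * (Ld ^ 2 + Lq ^ 2) := by
        calc Ld ^ 2 * ((Φ t *ᵥ x) 0) ^ 2 + Lq ^ 2 * ((Φ t *ᵥ x) 1) ^ 2
            = Real.exp (-ρ * t) * (Real.exp (ρ * t)
                * (Ld ^ 2 * ((Φ t *ᵥ x) 0) ^ 2 + Lq ^ 2 * ((Φ t *ᵥ x) 1) ^ 2)) := by
              rw [← mul_assoc, mul_comm (Real.exp (-ρ * t)), hEE', one_mul]
          _ ≤ Real.exp (-ρ * t) * (Ld ^ 2 * (x 0) ^ 2 + Lq ^ 2 * (x 1) ^ 2) :=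
              mul_le_mul_of_nonneg_left hb he'.le
          _ ≤ Real.exp (-ρ * t) * (Ld ^ 2 + Lq ^ 2) :=
              mul_le_mul_of_nonneg_left hxval he'.le
      have hmineq : min (Ld ^ 2) (Lq ^ 2) * (Φ t i j) ^ 2
          ≤ Ld ^ 2 * ((Φ t *ᵥ x) 0) ^ 2 + Lq ^ 2 * ((Φ t *ᵥ x) 1) ^ 2 := by
        have hi : i = 0 ∨ i = 1 := by fin_cases i <;> simp
        rcases hi with rfl | rfl
        · rw [← hΦij t]
          have := mul_le_mul_of_nonneg_right (min_le_left (Ld ^ 2) (Lq ^ 2))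
            (sq_nonneg ((Φ t *ᵥ x) 0))
          linarith [this, mul_nonneg (sq_nonneg Lq) (sq_nonneg ((Φ t *ᵥ x) 1))]
        · rw [← hΦij t]
          have := mul_le_mul_of_nonneg_right (min_le_right (Ld ^ 2) (Lq ^ 2))
            (sq_nonneg ((Φ t *ᵥ x) 1))
          linarith [this, mul_nonneg (sq_nonneg Ld) (sq_nonneg ((Φ t *ᵥ x) 0))]
      rw [div_mul_eq_mul_div, le_div_iff₀ hmnpos]
      calc (Φ t i j) ^ 2 * min (Ld ^ 2) (Lq ^ 2)
          = min (Ld ^ 2) (Lq ^ 2) * (Φ t i j) ^ 2 := by ring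
        _ ≤ Ld ^ 2 * ((Φ t *ᵥ x) 0) ^ 2 + Lq ^ 2 * ((Φ t *ᵥ x) 1) ^ 2 := hmineq
        _ ≤ Real.exp (-ρ * t) * (Ld ^ 2 + Lq ^ 2) := hchain
        _ = (Ld ^ 2 + Lq ^ 2) * Real.exp (-ρ * t) := by ring
    -- the squeezing argument
    have hexp0 : Filter.Tendsto (fun t : ℝ => (Ld ^ 2 + Lq ^ 2) / min (Ld ^ 2) (Lq ^ 2)
        * Real.exp (-ρ * t)) Filter.atTop (nhds 0) := by
      have h1 : Filter.Tendsto (fun t : ℝ => -ρ * t) Filter.atTop Filter.atBot := by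
        apply Filter.Tendsto.const_mul_atTop_of_neg (neg_neg_iff_pos.2 hρ) Filter.tendsto_id
      have h2 : Filter.Tendsto (fun t : ℝ => Real.exp (-ρ * t)) Filter.atTop (nhds 0) :=
        Real.tendsto_exp_atBot.comp h1
      simpa using h2.const_mul ((Ld ^ 2 + Lq ^ 2) / min (Ld ^ 2) (Lq ^ 2))
    have hsq : Filter.Tendsto (fun t => (Φ t i j) ^ 2) Filter.atTop (nhds 0) := by
      apply squeeze_zero' (Filter.Eventually.of_forall fun t => sq_nonneg _) _ hexp0
      filter_upwards [Filter.eventually_ge_atTop (0 : ℝ)] with t ht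
      exact hbnd t ht
    have habs : Filter.Tendsto (fun t => |Φ t i j|) Filter.atTop (nhds 0) := by
      have := hsq.sqrt
      simpa [Real.sqrt_sq_eq_abs] using this
    exact tendsto_zero_iff_abs_tendsto_zero _ |>.2 habs
end

section
/- DREM scalarization identity: Let n ≥ 1, let ξ : ℝ → ℝⁿ be continuous, 𝒢* ∈ ℝⁿ a constant vector, y(t) := ξ(t)ᵀ𝒢*, γ > 0, f₀ > 0, and χ : ℝ → ℝ continuous. Suppose Ĝ : ℝ → ℝⁿ, F : ℝ → ℝ^{n×n}, z : ℝ → ℝ are differentiable and satisfy Ĝ' = γ·F·ξ·(y − ξᵀĜ), F' = −γ·F·ξ·ξᵀ·F + χ·F with F(0) = (1/f₀)·Iₙ, and z' = −χ·z with z(0) = 1. Define Δ(t) := det(Iₙ − z(t)·f₀·F(t)) and Y(t) := adj(Iₙ − z(t)·f₀·F(t))·(Ĝ(t) − z(t)·f₀·F(t)·Ĝ(0)), where adj denotes the adjugate matrix. Then Y(t) = Δ(t)·𝒢* for all t ≥ 0. -/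
open Matrix Set

-- vecMulVec action
lemma vecMulVec_mulVec' {n : ℕ} (a b x : Fin n → ℝ) :
    vecMulVec a b *ᵥ x = (b ⬝ᵥ x) • a := by
  ext i
  simp [vecMulVec, mulVec, dotProduct, Finset.mul_sum, mul_comm, mul_assoc, mul_left_comm]

lemma dot_abs_le {n : ℕ} (a d : Fin n → ℝ) :
    |a ⬝ᵥ d| ≤ (∑ i, |a i|) * ‖d‖ := by
  calc |a ⬝ᵥ d| ≤ ∑ i, |a i * d i| := Finset.abs_sum_le_sum_abs _ _
    _ ≤ ∑ i, |a i| * ‖d‖ := by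
        refine Finset.sum_le_sum fun i _ => ?_
        rw [abs_mul]
        exact mul_le_mul_of_nonneg_left (by simpa [Real.norm_eq_abs] using norm_le_pi_norm d i)
          (abs_nonneg _)
    _ = (∑ i, |a i|) * ‖d‖ := by rw [Finset.sum_mul]


/-- DREM scalarization identity. For the least-squares estimator with
forgetting factor driven by `y(t) = ξ(t)ᵀ𝒢*` with `F(0) = (1/f₀)·Iₙ`, defining
`Δ(t) = det(Iₙ − z(t)f₀F(t))` and
`Y(t) = adj(Iₙ − z(t)f₀F(t))·(Ĝ(t) − z(t)f₀F(t)·Ĝ(0))`, one has `Y(t) = Δ(t)·𝒢*`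
for all `t ≥ 0`. -/
theorem stmt_18
    (n : ℕ) (hn : 1 ≤ n)
    (𝒢 : Fin n → ℝ) (ξ : ℝ → Fin n → ℝ) (hξ : Continuous ξ)
    (y : ℝ → ℝ) (hy : ∀ t, y t = ξ t ⬝ᵥ 𝒢)
    (γ f₀ : ℝ) (hγ : 0 < γ) (hf₀ : 0 < f₀)
    (χ : ℝ → ℝ) (hχ : Continuous χ)
    (Ghat : ℝ → Fin n → ℝ) (F : ℝ → Matrix (Fin n) (Fin n) ℝ) (z : ℝ → ℝ)
    (hGhat : ∀ t i, HasDerivAt (fun s => Ghat s i)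
      (((γ * (y t - ξ t ⬝ᵥ Ghat t)) • (F t *ᵥ ξ t)) i) t)
    (hF : ∀ t i j, HasDerivAt (fun s => F s i j)
      (((-γ) • (F t * vecMulVec (ξ t) (ξ t) * F t) + χ t • F t) i j) t)
    (hF0 : F 0 = (1 / f₀) • (1 : Matrix (Fin n) (Fin n) ℝ))
    (hz : ∀ t, HasDerivAt z (-(χ t) * z t) t) (hz0 : z 0 = 1) :
    ∀ t ≥ (0:ℝ),
      ((1 : Matrix (Fin n) (Fin n) ℝ) - (z t * f₀) • F t).adjugate
          *ᵥ (Ghat t - (z t * f₀) • (F t *ᵥ Ghat 0))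
        = ((1 : Matrix (Fin n) (Fin n) ℝ) - (z t * f₀) • F t).det • 𝒢 := by
  intro T hT
  -- error and auxiliary trajectories
  set c : Fin n → ℝ := Ghat 0 - 𝒢 with hc
  set e : ℝ → Fin n → ℝ := fun s => Ghat s - 𝒢 with he_def
  set w : ℝ → Fin n → ℝ := fun s => (z s * f₀) • (F s *ᵥ c) with hw_def
  -- derivatives
  have he' : ∀ s, HasDerivAt e ((-γ * (ξ s ⬝ᵥ e s)) • (F s *ᵥ ξ s)) s := by
    intro s
    rw [hasDerivAt_pi]
    intro i
    have h := (hGhat s i).sub_const (𝒢 i)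
    have hval : (γ * (y s - ξ s ⬝ᵥ Ghat s)) = -γ * (ξ s ⬝ᵥ e s) := by
      simp only [he_def, hy]
      rw [dotProduct_sub]
      ring
    simpa [he_def, hval] using h
  have hw' : ∀ s, HasDerivAt w ((-γ * (ξ s ⬝ᵥ w s)) • (F s *ᵥ ξ s)) s := by
    intro s
    have hzf : HasDerivAt (fun u => z u * f₀) (-(χ s) * z s * f₀) s := (hz s).mul_const f₀
    have hSum : HasDerivAt (fun u => F u *ᵥ c)
        (((-γ) • (F s * vecMulVec (ξ s) (ξ s) * F s) + χ s • F s) *ᵥ c) s := by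
      rw [hasDerivAt_pi]
      intro k
      simp only [mulVec, dotProduct]
      exact HasDerivAt.fun_sum fun j _ => (hF s k j).mul_const (c j)
    have h := hzf.smul hSum
    have key : (z s * f₀) • (((-γ) • (F s * vecMulVec (ξ s) (ξ s) * F s) + χ s • F s) *ᵥ c)
        + (-(χ s) * z s * f₀) • (F s *ᵥ c)
        = (-γ * (ξ s ⬝ᵥ w s)) • (F s *ᵥ ξ s) := by
      have h1 : ((-γ) • (F s * vecMulVec (ξ s) (ξ s) * F s) + χ s • F s) *ᵥ c
          = (-γ) • ((ξ s ⬝ᵥ (F s *ᵥ c)) • (F s *ᵥ ξ s)) + χ s • (F s *ᵥ c) := by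
        rw [add_mulVec, smul_mulVec, smul_mulVec]
        congr 1
        rw [← mulVec_mulVec, ← mulVec_mulVec, vecMulVec_mulVec', mulVec_smul]
      rw [h1, hw_def]
      simp only [dotProduct_smul, smul_smul, smul_add, smul_eq_mul]
      match_scalars <;> ring
    rw [key] at h
    exact h
  -- initial condition
  have hew0 : e 0 = w 0 := by
    simp [he_def, hw_def, hz0, hF0, smul_mulVec, one_mulVec, smul_smul,
      ne_of_gt hf₀, hc]
  -- uniqueness on [0, T]
  have heqT : e T = w T := by
    rcases eq_or_lt_of_le hT with h | hTpos
    · rw [← h]; exact hew0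
    -- clamp
    set p : ℝ → ℝ := fun s => max 0 (min s T) with hp
    have hpmem : ∀ s, p s ∈ Icc (0:ℝ) T := fun s =>
      ⟨le_max_left _ _, max_le (le_of_lt hTpos) (min_le_right _ _)⟩
    have hpid : ∀ s ∈ Ico (0:ℝ) T, p s = s := fun s hs => by
      simp [hp, min_eq_left (le_of_lt hs.2), max_eq_right hs.1]
    set v : ℝ → (Fin n → ℝ) → (Fin n → ℝ) :=
      fun s x => (-γ * (ξ (p s) ⬝ᵥ x)) • (F (p s) *ᵥ ξ (p s)) with hv_def
    -- continuity of F
    have hFc : Continuous F := by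
      refine continuous_matrix fun i j => ?_
      exact (continuous_iff_continuousAt.mpr fun s => (hF s i j).continuousAt)
    have hFξ : Continuous fun u => F u *ᵥ ξ u := by
      rw [continuous_pi_iff]
      intro i
      simp only [mulVec, dotProduct]
      exact continuous_finset_sum _ fun j _ =>
        ((continuous_apply j).comp ((continuous_apply i).comp hFc)).mul
          ((continuous_apply j).comp hξ)
    set B : ℝ → ℝ := fun u => γ * ((∑ i, |ξ u i|) * ‖F u *ᵥ ξ u‖) with hB
    have hBc : Continuous B :=
      continuous_const.mul ((continuous_finset_sum _ fun i _ =>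
        ((continuous_apply i).comp hξ).abs).mul hFξ.norm)
    obtain ⟨u₀, -, hu₀⟩ := isCompact_Icc.exists_isMaxOn (nonempty_Icc.mpr hT)
      (hBc.continuousOn (s := Icc 0 T))
    set C : ℝ := B u₀ with hC
    have hCb : ∀ u ∈ Icc (0:ℝ) T, B u ≤ C := fun u hu => hu₀ hu
    have hlip : ∀ s, LipschitzWith C.toNNReal (v s) := by
      intro s
      apply LipschitzWith.of_dist_le_mul
      intro x y'
      rw [dist_eq_norm, dist_eq_norm]
      have hsub : v s x - v s y' = (-γ * (ξ (p s) ⬝ᵥ (x - y'))) • (F (p s) *ᵥ ξ (p s)) := by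
        rw [hv_def]
        simp only [dotProduct_sub]
        rw [← sub_smul]
        congr 1
        ring
      rw [hsub, norm_smul]
      have : ‖-γ * (ξ (p s) ⬝ᵥ (x - y'))‖ ≤ γ * ((∑ i, |ξ (p s) i|) * ‖x - y'‖) := by
        rw [Real.norm_eq_abs, abs_mul, abs_neg, abs_of_pos hγ]
        exact mul_le_mul_of_nonneg_left (dot_abs_le _ _) (le_of_lt hγ)
      calc ‖-γ * (ξ (p s) ⬝ᵥ (x - y'))‖ * ‖F (p s) *ᵥ ξ (p s)‖
          ≤ (γ * ((∑ i, |ξ (p s) i|) * ‖x - y'‖)) * ‖F (p s) *ᵥ ξ (p s)‖ :=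
            mul_le_mul_of_nonneg_right this (norm_nonneg _)
        _ = B (p s) * ‖x - y'‖ := by simp only [hB]; ring
        _ ≤ C.toNNReal * ‖x - y'‖ := by
            apply mul_le_mul_of_nonneg_right _ (norm_nonneg _)
            refine le_trans (hCb _ (hpmem s)) ?_
            exact le_max_left _ _
    have huniq := ODE_solution_unique_of_mem_Icc_right (v := v)
      (s := fun _ => (univ : Set (Fin n → ℝ))) (K := C.toNNReal) (a := 0) (b := T)
      (fun t _ => (hlip t).lipschitzOnWith)
      (Continuous.continuousOn (continuous_iff_continuousAt.mpr fun s => (he' s).continuousAt))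
      (fun u hu => by
        have := (he' u).hasDerivWithinAt (s := Ici u)
        rwa [show (-γ * (ξ u ⬝ᵥ e u)) • (F u *ᵥ ξ u) = v u (e u) by simp only [hv_def, hpid u hu]]
          at this)
      (fun _ _ => mem_univ _)
      (Continuous.continuousOn (continuous_iff_continuousAt.mpr fun s => (hw' s).continuousAt))
      (fun u hu => by
        have := (hw' u).hasDerivWithinAt (s := Ici u)
        rwa [show (-γ * (ξ u ⬝ᵥ w u)) • (F u *ᵥ ξ u) = v u (w u) by simp only [hv_def, hpid u hu]]
          at this)
      (fun _ _ => mem_univ _)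
      hew0
    exact huniq (right_mem_Icc.mpr hT)
  -- algebra to conclude
  have hvec : Ghat T - (z T * f₀) • (F T *ᵥ Ghat 0)
      = ((1 : Matrix (Fin n) (Fin n) ℝ) - (z T * f₀) • F T) *ᵥ 𝒢 := by
    have h1 : Ghat T = e T + 𝒢 := by simp [he_def]
    have h2 : Ghat 0 = c + 𝒢 := by simp [hc]
    rw [h1, h2, heqT, sub_mulVec, one_mulVec, smul_mulVec]
    simp only [hw_def, mulVec_add]
    module
  rw [hvec, mulVec_mulVec, adjugate_mul, smul_mulVec, one_mulVec]
end
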